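/- arXiv:1502.00917 — 3 statements merged into one kernel-verified Lean document; each statement's English description precedes it below -/
import Mathlib

section
/- Let N ≥ 1, β ∈ ℝ, s ∈ {−1,+1}^N, let U ⊆ (ℝ²)^N be open, and let ψ : U → ℂ be continuously differentiable and satisfy the multi-time transport equations for s on U. Let Λ_β(t,z) := (t cosh β + z sinh β, t sinh β + z cosh β), let U' be the image of U under the componentwise boost, and define ψ'(x_1,…,x_N) := (∏_{j=1}^N (cosh β − s_j sinh β)) · ψ(Λ_{−β} x_1, …, Λ_{−β} x_N) for (x_1,…,x_N) ∈ U'. Then ψ' is continuously differentiable on U' and satisfies the multi-time transport equations for s on U'. (The multi-time Dirac system is covariant under Lorentz boosts.) -/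
noncomputable section

/-- The Lorentz boost `Λ_β(t,z) = (t cosh β + z sinh β, t sinh β + z cosh β)` on `ℝ²`. -/
def boost (β : ℝ) (x : ℝ × ℝ) : ℝ × ℝ :=
  (x.1 * Real.cosh β + x.2 * Real.sinh β, x.1 * Real.sinh β + x.2 * Real.cosh β)

/-- `ψ` satisfies the multi-time transport equations for the sign vector `s` on the set `U`:
`∂ψ/∂t_k = s_k · ∂ψ/∂z_k` for every `k`. Points written as `x_k = (t_k, z_k)`. -/
def Transport {N : ℕ} (s : Fin N → ℝ) (U : Set (Fin N → ℝ × ℝ))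
    (ψ : (Fin N → ℝ × ℝ) → ℂ) : Prop :=
  ∀ p ∈ U, ∀ k : Fin N,
    fderiv ℝ ψ p (Pi.single k ((1 : ℝ), (0 : ℝ)))
      = s k • fderiv ℝ ψ p (Pi.single k ((0 : ℝ), (1 : ℝ)))

def boostLM (β : ℝ) : (ℝ × ℝ) →ₗ[ℝ] (ℝ × ℝ) where
  toFun := boost β
  map_add' x y := by simp [boost, Prod.ext_iff]; constructor <;> ring
  map_smul' c x := by simp [boost, Prod.ext_iff]; constructor <;> ring

def boostCLM (β : ℝ) : (ℝ × ℝ) →L[ℝ] (ℝ × ℝ) :=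
  LinearMap.toContinuousLinearMap (boostLM β)

def LB {N : ℕ} (β : ℝ) : (Fin N → ℝ × ℝ) →L[ℝ] (Fin N → ℝ × ℝ) :=
  ContinuousLinearMap.pi fun k => (boostCLM β).comp (ContinuousLinearMap.proj k)

lemma LB_apply {N : ℕ} (β : ℝ) (x : Fin N → ℝ × ℝ) :
    LB β x = fun k => boost β (x k) := rfl

lemma boost_boost (β : ℝ) (x : ℝ × ℝ) : boost (-β) (boost β x) = x := by
  have h := Real.cosh_sq_sub_sinh_sq β
  simp [boost, Prod.ext_iff]
  constructor
  · linear_combination x.1 * h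
  · linear_combination x.2 * h

lemma LB_LB {N : ℕ} (β : ℝ) (x : Fin N → ℝ × ℝ) : LB (-β) (LB β x) = x := by
  funext k; exact boost_boost β (x k)

lemma LB_single {N : ℕ} (β : ℝ) (k : Fin N) (v : ℝ × ℝ) :
    LB β (Pi.single k v) = Pi.single k (boost β v) := by
  funext j
  rcases eq_or_ne j k with h | h
  · subst h; simp [LB_apply]
  · simp [LB_apply, Pi.single_eq_of_ne h, boost]

lemma boost_e1 (β : ℝ) :
    boost (-β) ((1:ℝ), (0:ℝ)) = (Real.cosh β, -Real.sinh β) := by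
  simp [boost]

lemma boost_e2 (β : ℝ) :
    boost (-β) ((0:ℝ), (1:ℝ)) = (-Real.sinh β, Real.cosh β) := by
  simp [boost]

lemma single_decomp {N : ℕ} (k : Fin N) (a b : ℝ) :
    (Pi.single k ((a, b) : ℝ × ℝ) : Fin N → ℝ × ℝ)
      = a • (Pi.single k ((1:ℝ), (0:ℝ)) : Fin N → ℝ × ℝ)
        + b • (Pi.single k ((0:ℝ), (1:ℝ)) : Fin N → ℝ × ℝ) := by
  funext j
  rcases eq_or_ne j k with h | h
  · subst h; simp [Prod.ext_iff]
  · simp [Pi.single_eq_of_ne h]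


/-- the multi-time transport system is covariant under Lorentz boosts: if
`ψ` is `C¹` on the open set `U` and satisfies the transport equations for `s` there, then
`ψ'(x₁,…,x_N) = (∏_j (cosh β − s_j sinh β)) · ψ(Λ_{−β}x₁,…,Λ_{−β}x_N)` is `C¹` on the
image `U'` of `U` under the componentwise boost `Λ_β` and satisfies the transport
equations for `s` on `U'`. -/
theorem stmt10 (N : ℕ) (hN : 1 ≤ N) (β : ℝ)
    (s : Fin N → ℝ) (hs : ∀ k, s k = 1 ∨ s k = -1)
    (U : Set (Fin N → ℝ × ℝ)) (hU : IsOpen U)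
    (ψ : (Fin N → ℝ × ℝ) → ℂ) (hC1 : ContDiffOn ℝ 1 ψ U) (hT : Transport s U ψ) :
    ContDiffOn ℝ 1
        (fun x : Fin N → ℝ × ℝ =>
          ((∏ j : Fin N, (Real.cosh β - s j * Real.sinh β) : ℝ) : ℂ) *
            ψ (fun k => boost (-β) (x k)))
        ((fun (x : Fin N → ℝ × ℝ) (k : Fin N) => boost β (x k)) '' U) ∧
      Transport s ((fun (x : Fin N → ℝ × ℝ) (k : Fin N) => boost β (x k)) '' U)
        (fun x : Fin N → ℝ × ℝ =>
          ((∏ j : Fin N, (Real.cosh β - s j * Real.sinh β) : ℝ) : ℂ) *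
            ψ (fun k => boost (-β) (x k))) := by
  set c : ℂ := ((∏ j : Fin N, (Real.cosh β - s j * Real.sinh β) : ℝ) : ℂ) with hc
  have h_im : ((fun (x : Fin N → ℝ × ℝ) (k : Fin N) => boost β (x k)) '' U)
      = LB (-β) ⁻¹' U := by
    ext p
    constructor
    · rintro ⟨x, hx, rfl⟩
      have : LB (-β) (fun k => boost β (x k)) = x := LB_LB β x
      simpa [Set.mem_preimage, this] using hx
    · intro hp
      refine ⟨LB (-β) p, hp, ?_⟩
      have := LB_LB (-β) p
      rw [neg_neg] at this
      exact this
  have hfun : (fun x : Fin N → ℝ × ℝ => c * ψ (fun k => boost (-β) (x k)))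
      = fun x => c * ψ (LB (-β) x) := rfl
  constructor
  · rw [h_im, hfun]
    exact contDiffOn_const.mul
      (hC1.comp ((LB (-β)).contDiff.contDiffOn) (fun x hx => hx))
  · intro p hp k
    rw [h_im] at hp
    have hq : LB (-β) p ∈ U := hp
    set q := LB (-β) p with hqdef
    have hd : DifferentiableAt ℝ ψ q :=
      ((hC1.differentiableOn one_ne_zero).differentiableAt (hU.mem_nhds hq))
    have hg : HasFDerivAt (fun x => ψ (LB (-β) x))
        ((fderiv ℝ ψ q).comp (LB (-β))) p :=
      hd.hasFDerivAt.comp p (LB (-β)).hasFDerivAt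
    have hψ' : HasFDerivAt (fun x : Fin N → ℝ × ℝ => c * ψ (fun k => boost (-β) (x k)))
        (c • ((fderiv ℝ ψ q).comp (LB (-β)))) p := by
      rw [hfun]; exact hg.const_mul c
    rw [hψ'.fderiv]
    have e1 : LB (N := N) (-β) (Pi.single k ((1:ℝ), (0:ℝ)))
        = Real.cosh β • (Pi.single k ((1:ℝ), (0:ℝ)) : Fin N → ℝ × ℝ)
          + (-Real.sinh β) • (Pi.single k ((0:ℝ), (1:ℝ)) : Fin N → ℝ × ℝ) := by
      rw [LB_single, boost_e1, single_decomp]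
    have e2 : LB (N := N) (-β) (Pi.single k ((0:ℝ), (1:ℝ)))
        = (-Real.sinh β) • (Pi.single k ((1:ℝ), (0:ℝ)) : Fin N → ℝ × ℝ)
          + Real.cosh β • (Pi.single k ((0:ℝ), (1:ℝ)) : Fin N → ℝ × ℝ) := by
      rw [LB_single, boost_e2, single_decomp]
    have hTq := hT q hq k
    simp only [ContinuousLinearMap.smul_apply, ContinuousLinearMap.coe_comp',
      Function.comp_apply, e1, e2, map_add, map_smul, hTq]
    set A := fderiv ℝ ψ q (Pi.single k ((0:ℝ), (1:ℝ))) with hA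
    simp only [smul_eq_mul, Complex.real_smul, smul_smul]
    rcases hs k with h | h <;> rw [h] <;> push_cast <;> ring
end
end

section
/- Let N ≥ 2, φ^{(1)},…,φ^{(N−1)} ∈ ℝ, and let (ψ_s) be a solution of the initial-boundary value problem with data g = (g_s). Let p = (t_1,z_1,…,t_N,z_N) ∈ S̄_1, let s ∈ {−1,+1}^N, and set c_k := z_k + s_k t_k. Suppose that for some k ∈ {1,…,N−1} one has c_k > c_{k+1}, while the list obtained from (c_1,…,c_N) by interchanging c_k and c_{k+1} is nondecreasing (i.e. c_1 ≤ ⋯ ≤ c_{k−1} ≤ c_{k+1} and c_k ≤ c_{k+2} ≤ ⋯ ≤ c_N). Then ψ_s(p) = e^{i s_k φ^{(k)}} · g_{τ_k s}(c_1,…,c_{k−1},c_{k+1},c_k,c_{k+2},…,c_N), where τ_k s is s with entries k and k+1 interchanged. (Single-collision case of the explicit solution formula.) -/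
noncomputable section

/-- Sign associated with a Bool: `true ↦ +1`, `false ↦ -1`. -/
def sgn (b : Bool) : ℝ := if b then 1 else -1

/-- The set `S₁` of space-like ordered configurations. -/
def S1 (N : ℕ) : Set (Fin N → ℝ × ℝ) :=
  {x | (∀ j k : Fin N, j ≠ k → ((x j).1 - (x k).1) ^ 2 < ((x j).2 - (x k).2) ^ 2) ∧
       ∀ j k : Fin N, j < k → (x j).2 < (x k).2}

/-- The coincidence set `C_{k,k+1}` inside the closure of `S₁` (0-based `k`, `k+1 < N`). -/
def Ckk (N : ℕ) (k : ℕ) (hk : k + 1 < N) : Set (Fin N → ℝ × ℝ) :=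
  {x ∈ closure (S1 N) |
    (x ⟨k, Nat.lt_of_succ_lt hk⟩).1 = (x ⟨k + 1, hk⟩).1 ∧
    (x ⟨k, Nat.lt_of_succ_lt hk⟩).2 = (x ⟨k + 1, hk⟩).2}

/-- A family `(ψ_s)` of functions (indexed by sign vectors `s : Fin N → Bool`) is a
solution of the initial-boundary value problem with phases `φ^{(k)}` and initial data
`(g_s)`, if each `ψ_s` is continuous on the closure of `S₁`, `C¹` on `S₁`, satisfies the
multi-time transport equations for `s` on `S₁`, the boundary conditions
`ψ_s = e^{iφ^{(k)}} ψ_{τ_k s}` on `C_{k,k+1}` (for `s_k = +1`, `s_{k+1} = −1`), and the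
initial conditions `ψ_s(0,z₁,…,0,z_N) = g_s(z₁,…,z_N)` for `z₁ ≤ ⋯ ≤ z_N`. -/
def IsSolution (N : ℕ) (φ : ℕ → ℝ) (g : (Fin N → Bool) → (Fin N → ℝ) → ℂ)
    (ψ : (Fin N → Bool) → (Fin N → ℝ × ℝ) → ℂ) : Prop :=
  (∀ s, ContinuousOn (ψ s) (closure (S1 N))) ∧
  (∀ s, ContDiffOn ℝ 1 (ψ s) (S1 N)) ∧
  (∀ s, Transport (fun k => sgn (s k)) (S1 N) (ψ s)) ∧
  (∀ (k : ℕ) (hk : k + 1 < N) (s : Fin N → Bool),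
    s ⟨k, Nat.lt_of_succ_lt hk⟩ = true → s ⟨k + 1, hk⟩ = false →
    ∀ p ∈ Ckk N k hk,
      ψ s p = Complex.exp (Complex.I * (φ k : ℂ)) *
        ψ (s ∘ Equiv.swap ⟨k, Nat.lt_of_succ_lt hk⟩ ⟨k + 1, hk⟩) p) ∧
  (∀ s, ∀ z : Fin N → ℝ, (∀ i j : Fin N, i ≤ j → z i ≤ z j) →
    ψ s (fun k => ((0 : ℝ), z k)) = g s z)



section Aux

open Filter Topology

lemma sgn_cases (b : Bool) : sgn b = 1 ∨ sgn b = -1 := by cases b <;> simp [sgn]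

lemma abs_lt_of_sq_lt {a b : ℝ} (h : a^2 < b^2) (hb : 0 ≤ b) : |a| < b := by
  nlinarith [abs_nonneg a, sq_abs a]

lemma mem_S1_of_slt {N : ℕ} (x : Fin N → ℝ × ℝ)
    (h : ∀ j m : Fin N, j < m → |(x j).1 - (x m).1| < (x m).2 - (x j).2) : x ∈ S1 N := by
  constructor
  · intro j m hjm
    rcases lt_or_gt_of_ne hjm with h' | h'
    · have h2 := abs_lt.1 (h j m h'); nlinarith [h2.1, h2.2]
    · have h2 := abs_lt.1 (h m j h'); nlinarith [h2.1, h2.2]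
  · intro j m hjm
    have h1 := h j m hjm; have h2 := abs_nonneg ((x j).1 - (x m).1); linarith

lemma slt_of_mem_S1 {N : ℕ} {x : Fin N → ℝ × ℝ} (hx : x ∈ S1 N) :
    ∀ j m : Fin N, j < m → |(x j).1 - (x m).1| < (x m).2 - (x j).2 := by
  intro j m hjm
  have h1 := hx.1 j m (ne_of_lt hjm)
  have h2 := hx.2 j m hjm
  have h3 : ((x j).1 - (x m).1)^2 < ((x m).2 - (x j).2)^2 := by nlinarith
  exact abs_lt_of_sq_lt h3 (by linarith)

lemma S1_open (N : ℕ) : IsOpen (S1 N) := by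
  have hset : S1 N =
      (⋂ j : Fin N, ⋂ m : Fin N,
        {x : Fin N → ℝ × ℝ | j ≠ m → ((x j).1 - (x m).1) ^ 2 < ((x j).2 - (x m).2) ^ 2}) ∩
      (⋂ j : Fin N, ⋂ m : Fin N, {x : Fin N → ℝ × ℝ | j < m → (x j).2 < (x m).2}) := by
    ext x
    simp only [S1, Set.mem_setOf_eq, Set.mem_inter_iff, Set.mem_iInter]
  rw [hset]
  apply IsOpen.inter <;> refine isOpen_iInter_of_finite fun j => isOpen_iInter_of_finite fun m => ?_
  · by_cases hjm : j = m
    · subst hjm; simp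
    · have : {x : Fin N → ℝ × ℝ | j ≠ m → ((x j).1 - (x m).1) ^ 2 < ((x j).2 - (x m).2) ^ 2}
          = {x : Fin N → ℝ × ℝ | ((x j).1 - (x m).1) ^ 2 < ((x j).2 - (x m).2) ^ 2} := by
        ext x; simp [hjm]
      rw [this]
      exact isOpen_lt (by fun_prop) (by fun_prop)
  · by_cases hjm : j < m
    · have : {x : Fin N → ℝ × ℝ | j < m → (x j).2 < (x m).2}
          = {x : Fin N → ℝ × ℝ | (x j).2 < (x m).2} := by ext x; simp [hjm]
      rw [this]
      exact isOpen_lt (by fun_prop) (by fun_prop)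
    · have : {x : Fin N → ℝ × ℝ | j < m → (x j).2 < (x m).2} = Set.univ := by
        ext x; simp [hjm]
      rw [this]; exact isOpen_univ

lemma combo_pt (a w : ℝ × ℝ) (μ : ℝ) : a + μ • w = (1 - μ) • a + μ • (a + w) := by
  rw [smul_add, sub_smul, one_smul]; abel

lemma slt_combo_left {a b a' b' : ℝ × ℝ} (h0 : |a.1 - b.1| < b.2 - a.2)
    (h1 : |a'.1 - b'.1| ≤ b'.2 - a'.2) {μ : ℝ} (hμ0 : 0 ≤ μ) (hμ1 : μ < 1) :
    |((1 - μ) • a + μ • a').1 - ((1 - μ) • b + μ • b').1|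
      < ((1 - μ) • b + μ • b').2 - ((1 - μ) • a + μ • a').2 := by
  have e1 : ((1 - μ) • a + μ • a').1 - ((1 - μ) • b + μ • b').1
      = (1 - μ) * (a.1 - b.1) + μ * (a'.1 - b'.1) := by
    simp [Prod.smul_fst, Prod.fst_add, smul_eq_mul]; ring
  have e2 : ((1 - μ) • b + μ • b').2 - ((1 - μ) • a + μ • a').2
      = (1 - μ) * (b.2 - a.2) + μ * (b'.2 - a'.2) := by
    simp [Prod.smul_snd, Prod.snd_add, smul_eq_mul]; ring
  rw [e1, e2]
  calc |(1 - μ) * (a.1 - b.1) + μ * (a'.1 - b'.1)|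
      ≤ |(1 - μ) * (a.1 - b.1)| + |μ * (a'.1 - b'.1)| := abs_add_le _ _
    _ = (1 - μ) * |a.1 - b.1| + μ * |a'.1 - b'.1| := by
        rw [abs_mul, abs_mul, abs_of_nonneg (by linarith : (0:ℝ) ≤ 1 - μ), abs_of_nonneg hμ0]
    _ < (1 - μ) * (b.2 - a.2) + μ * (b'.2 - a'.2) := by
        have := mul_lt_mul_of_pos_left h0 (by linarith : (0:ℝ) < 1 - μ)
        have := mul_le_mul_of_nonneg_left h1 hμ0
        linarith

lemma slt_combo_right {a b a' b' : ℝ × ℝ} (h0 : |a.1 - b.1| ≤ b.2 - a.2)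
    (h1 : |a'.1 - b'.1| < b'.2 - a'.2) {μ : ℝ} (hμ0 : 0 < μ) (hμ1 : μ ≤ 1) :
    |((1 - μ) • a + μ • a').1 - ((1 - μ) • b + μ • b').1|
      < ((1 - μ) • b + μ • b').2 - ((1 - μ) • a + μ • a').2 := by
  have e1 : ((1 - μ) • a + μ • a').1 - ((1 - μ) • b + μ • b').1
      = (1 - μ) * (a.1 - b.1) + μ * (a'.1 - b'.1) := by
    simp [Prod.smul_fst, Prod.fst_add, smul_eq_mul]; ring
  have e2 : ((1 - μ) • b + μ • b').2 - ((1 - μ) • a + μ • a').2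
      = (1 - μ) * (b.2 - a.2) + μ * (b'.2 - a'.2) := by
    simp [Prod.smul_snd, Prod.snd_add, smul_eq_mul]; ring
  rw [e1, e2]
  calc |(1 - μ) * (a.1 - b.1) + μ * (a'.1 - b'.1)|
      ≤ |(1 - μ) * (a.1 - b.1)| + |μ * (a'.1 - b'.1)| := abs_add_le _ _
    _ = (1 - μ) * |a.1 - b.1| + μ * |a'.1 - b'.1| := by
        rw [abs_mul, abs_mul, abs_of_nonneg (by linarith : (0:ℝ) ≤ 1 - μ), abs_of_nonneg hμ0.le]
    _ < (1 - μ) * (b.2 - a.2) + μ * (b'.2 - a'.2) := by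
        have := mul_lt_mul_of_pos_left h1 hμ0
        have := mul_le_mul_of_nonneg_left h0 (by linarith : (0:ℝ) ≤ 1 - μ)
        linarith

lemma seq0_mem (n : ℕ) : (1:ℝ)/(n+2) ∈ Set.Ioo (0:ℝ) 1 := by
  constructor
  · positivity
  · rw [div_lt_one (by positivity)]
    have : (0:ℝ) ≤ (n:ℝ) := Nat.cast_nonneg n
    linarith

lemma seq0_tendsto : Tendsto (fun n : ℕ => (1:ℝ)/(n+2)) atTop (𝓝 0) := by
  have h : Tendsto (fun n : ℕ => ((n:ℝ)+2)) atTop atTop :=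
    tendsto_atTop_add_const_right _ 2 tendsto_natCast_atTop_atTop
  simp only [one_div]; exact h.inv_tendsto_atTop

lemma const_along {N : ℕ} (ψ : (Fin N → ℝ × ℝ) → ℂ) (sv : Fin N → ℝ)
    (hcont : ContinuousOn ψ (closure (S1 N))) (hC1 : ContDiffOn ℝ 1 ψ (S1 N))
    (htr : Transport sv (S1 N) ψ) (A0 v : Fin N → ℝ × ℝ)
    (hv : ∀ m, (v m).2 = -(sv m) * (v m).1)
    (hS : ∀ μ : ℝ, μ ∈ Set.Ioo (0:ℝ) 1 → (A0 + μ • v) ∈ S1 N) :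
    ψ A0 = ψ (A0 + v) ∧ A0 ∈ closure (S1 N) ∧ A0 + v ∈ closure (S1 N) := by
  set A : ℝ → (Fin N → ℝ × ℝ) := fun μ => A0 + μ • v with hA
  have hAcont : Continuous A := by
    apply continuous_pi
    intro m
    have : (fun μ : ℝ => A μ m) = fun μ : ℝ => A0 m + μ • v m := rfl
    rw [this]
    exact continuous_const.add (continuous_id.smul continuous_const)
  have hA0 : A 0 = A0 := by simp [hA]
  have hA1 : A 1 = A0 + v := by simp [hA]
  -- sequences approaching the endpoints from inside
  have hseq0 : Tendsto (fun n : ℕ => A (1/(n+2))) atTop (𝓝 A0) := by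
    rw [← hA0]
    exact (hAcont.tendsto 0).comp seq0_tendsto
  have hseq1 : Tendsto (fun n : ℕ => A (1 - 1/(n+2))) atTop (𝓝 (A0 + v)) := by
    rw [← hA1]
    refine (hAcont.tendsto 1).comp ?_
    have := seq0_tendsto.const_sub 1
    simpa using this
  have hmem0 : ∀ n : ℕ, A (1/(n+2)) ∈ S1 N := fun n => hS _ (seq0_mem n)
  have hmem1 : ∀ n : ℕ, A (1 - 1/(n+2)) ∈ S1 N := by
    intro n
    refine hS _ ⟨?_, ?_⟩
    · have := (seq0_mem n).2; linarith
    · have := (seq0_mem n).1; linarith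
  have hA0cl : A0 ∈ closure (S1 N) :=
    mem_closure_of_tendsto hseq0 (Filter.Eventually.of_forall hmem0)
  have hA1cl : A0 + v ∈ closure (S1 N) :=
    mem_closure_of_tendsto hseq1 (Filter.Eventually.of_forall hmem1)
  -- derivative vanishes inside
  have hd : ∀ μ ∈ Set.Ioo (0:ℝ) 1, HasDerivAt (fun μ => ψ (A μ)) 0 μ := by
    intro μ hμ
    have hmem := hS μ hμ
    have hdiffψ : DifferentiableAt ℝ ψ (A μ) :=
      (hC1.contDiffAt ((S1_open N).mem_nhds hmem)).differentiableAt one_ne_zero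
    have hAd : HasDerivAt A v μ := by
      have h1 : HasDerivAt (fun μ : ℝ => μ • v) ((1:ℝ) • v) μ := (hasDerivAt_id μ).smul_const v
      have h2 := h1.const_add A0
      simpa [hA] using h2
    have hcomp : HasDerivAt (fun μ => ψ (A μ)) (fderiv ℝ ψ (A μ) v) μ :=
      hdiffψ.hasFDerivAt.comp_hasDerivAt μ hAd
    have hzero : fderiv ℝ ψ (A μ) v = 0 := by
      have hv' : v = ∑ m, Pi.single m (v m) := (Finset.univ_sum_single v).symm
      rw [hv', map_sum]
      refine Finset.sum_eq_zero fun m _ => ?_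
      have hvm : v m = (v m).1 • ((1:ℝ),(0:ℝ)) + (v m).2 • ((0:ℝ),(1:ℝ)) := by
        apply Prod.ext <;> simp
      have hdecomp : (Pi.single m (v m) : Fin N → ℝ × ℝ)
          = (v m).1 • (Pi.single m ((1:ℝ),(0:ℝ)) : Fin N → ℝ × ℝ)
            + (v m).2 • (Pi.single m ((0:ℝ),(1:ℝ)) : Fin N → ℝ × ℝ) := by
        rw [← Pi.single_smul, ← Pi.single_smul, ← Pi.single_add, ← hvm]
      have htr' := htr (A μ) hmem m
      rw [hdecomp, map_add, map_smul, map_smul, htr', hv m, smul_smul, ← add_smul]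
      have hc : (v m).1 * sv m + -(sv m) * (v m).1 = 0 := by ring
      rw [hc, zero_smul]
    rw [hzero] at hcomp
    exact hcomp
  -- constancy inside
  have hconst : ∀ μ ∈ Set.Ioo (0:ℝ) 1, ∀ μ' ∈ Set.Ioo (0:ℝ) 1, ψ (A μ) = ψ (A μ') := by
    intro μ hμ μ' hμ'
    have hb := Convex.norm_image_sub_le_of_norm_hasDerivWithin_le
      (f := fun μ => ψ (A μ)) (f' := fun _ => (0:ℂ)) (C := 0)
      (fun x hx => (hd x hx).hasDerivWithinAt) (fun x _ => by simp)
      (convex_Ioo (0:ℝ) 1) hμ hμ'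
    have : ‖ψ (A μ') - ψ (A μ)‖ ≤ 0 := by simpa using hb
    have := norm_le_zero_iff.1 this
    have := sub_eq_zero.1 this
    exact this.symm
  have hhalf : (1/2 : ℝ) ∈ Set.Ioo (0:ℝ) 1 := by norm_num
  set c0 := ψ (A (1/2)) with hc0
  have hend0 : ψ A0 = c0 := by
    have hcw : Tendsto (fun n : ℕ => ψ (A (1/(n+2)))) atTop (𝓝 (ψ A0)) := by
      refine ((hcont A0 hA0cl).tendsto).comp ?_
      exact tendsto_nhdsWithin_of_tendsto_nhds_of_eventually_within _ hseq0
        (Filter.Eventually.of_forall fun n => subset_closure (hmem0 n))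
    have hcc : (fun n : ℕ => ψ (A (1/(n+2)))) = fun _ => c0 := by
      funext n; exact hconst _ (seq0_mem n) _ hhalf
    rw [hcc] at hcw
    exact tendsto_nhds_unique hcw tendsto_const_nhds
  have hend1 : ψ (A0 + v) = c0 := by
    have hcw : Tendsto (fun n : ℕ => ψ (A (1 - 1/(n+2)))) atTop (𝓝 (ψ (A0 + v))) := by
      refine ((hcont _ hA1cl).tendsto).comp ?_
      exact tendsto_nhdsWithin_of_tendsto_nhds_of_eventually_within _ hseq1
        (Filter.Eventually.of_forall fun n => subset_closure (hmem1 n))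
    have hcc : (fun n : ℕ => ψ (A (1 - 1/(n+2)))) = fun _ => c0 := by
      funext n
      refine hconst _ ⟨?_, ?_⟩ _ hhalf
      · have := (seq0_mem n).2; linarith
      · have := (seq0_mem n).1; linarith
    rw [hcc] at hcw
    exact tendsto_nhds_unique hcw tendsto_const_nhds
  exact ⟨hend0.trans hend1.symm, hA0cl, hA1cl⟩


theorem stmt13_strict (N : ℕ) (φ : ℕ → ℝ)
    (g : (Fin N → Bool) → (Fin N → ℝ) → ℂ)
    (ψ : (Fin N → Bool) → (Fin N → ℝ × ℝ) → ℂ)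
    (hψ : IsSolution N φ g ψ)
    (p : Fin N → ℝ × ℝ) (hp : p ∈ S1 N) (s : Fin N → Bool)
    (k : ℕ) (hk : k + 1 < N)
    (hcoll : (p ⟨k, Nat.lt_of_succ_lt hk⟩).2
          + sgn (s ⟨k, Nat.lt_of_succ_lt hk⟩) * (p ⟨k, Nat.lt_of_succ_lt hk⟩).1
        > (p ⟨k + 1, hk⟩).2 + sgn (s ⟨k + 1, hk⟩) * (p ⟨k + 1, hk⟩).1)
    (hsorted : ∀ i j : Fin N, i ≤ j →
      (fun m => (p (Equiv.swap ⟨k, Nat.lt_of_succ_lt hk⟩ ⟨k + 1, hk⟩ m)).2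
          + sgn (s (Equiv.swap ⟨k, Nat.lt_of_succ_lt hk⟩ ⟨k + 1, hk⟩ m))
            * (p (Equiv.swap ⟨k, Nat.lt_of_succ_lt hk⟩ ⟨k + 1, hk⟩ m)).1) i
        ≤ (fun m => (p (Equiv.swap ⟨k, Nat.lt_of_succ_lt hk⟩ ⟨k + 1, hk⟩ m)).2
          + sgn (s (Equiv.swap ⟨k, Nat.lt_of_succ_lt hk⟩ ⟨k + 1, hk⟩ m))
            * (p (Equiv.swap ⟨k, Nat.lt_of_succ_lt hk⟩ ⟨k + 1, hk⟩ m)).1) j) :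
    ψ s p = Complex.exp (Complex.I * ((sgn (s ⟨k, Nat.lt_of_succ_lt hk⟩) * φ k : ℝ) : ℂ)) *
      g (s ∘ Equiv.swap ⟨k, Nat.lt_of_succ_lt hk⟩ ⟨k + 1, hk⟩)
        (fun m => (p (Equiv.swap ⟨k, Nat.lt_of_succ_lt hk⟩ ⟨k + 1, hk⟩ m)).2
          + sgn (s (Equiv.swap ⟨k, Nat.lt_of_succ_lt hk⟩ ⟨k + 1, hk⟩ m))
            * (p (Equiv.swap ⟨k, Nat.lt_of_succ_lt hk⟩ ⟨k + 1, hk⟩ m)).1) := by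
  set κ : Fin N := ⟨k, Nat.lt_of_succ_lt hk⟩ with hκdef
  set κ' : Fin N := ⟨k + 1, hk⟩ with hκ'def
  have hκκ'lt : κ < κ' := by rw [hκdef, hκ'def]; exact Fin.mk_lt_mk.2 (Nat.lt_succ_self k)
  have hκκ'ne : κ ≠ κ' := ne_of_lt hκκ'lt
  have hswκ : Equiv.swap κ κ' κ = κ' := Equiv.swap_apply_left κ κ'
  have hswκ' : Equiv.swap κ κ' κ' = κ := Equiv.swap_apply_right κ κ'
  have hswo : ∀ m : Fin N, m ≠ κ → m ≠ κ' → Equiv.swap κ κ' m = m :=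
    fun m h1 h2 => Equiv.swap_apply_of_ne_of_ne h1 h2
  have hsplit : ∀ j : Fin N, j ≠ κ → j ≠ κ' → j < κ ∨ κ' < j := by
    intro j h1 h2
    have e1 : (j : ℕ) ≠ k := by
      intro h; exact h1 (by rw [hκdef]; exact Fin.ext h)
    have e2 : (j : ℕ) ≠ k + 1 := by
      intro h; exact h2 (by rw [hκ'def]; exact Fin.ext h)
    rcases Nat.lt_or_ge (j : ℕ) k with h | h
    · left; rw [hκdef]; exact Fin.lt_def.2 (by simpa using h)
    · right; rw [hκ'def]; refine Fin.lt_def.2 ?_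
      show k + 1 < (j : ℕ)
      omega
  set c : Fin N → ℝ := fun m => (p m).2 + sgn (s m) * (p m).1 with hcdef
  have hcval : ∀ m, c m = (p m).2 + sgn (s m) * (p m).1 := fun m => by rw [hcdef]
  have hcc : c κ > c κ' := hcoll
  have key := slt_of_mem_S1 hp
  have hkeyκ := abs_lt.1 (key κ κ' hκκ'lt)
  have hopp : sgn (s κ') = - sgn (s κ) := by
    rcases sgn_cases (s κ) with h1 | h1 <;> rcases sgn_cases (s κ') with h2 | h2 <;>
      rw [h1, h2] at hcoll ⊢ <;>
      first
        | (exfalso; linarith [hcoll, hkeyκ.1, hkeyκ.2])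
        | norm_num
  set u : ℝ := sgn (s κ) * (c κ - c κ') / 2 with hu_def
  set y : ℝ := (c κ + c κ') / 2 with hy_def
  have hyu1 : y + sgn (s κ) * u = c κ := by
    rw [hu_def, hy_def]; rcases sgn_cases (s κ) with h | h <;> rw [h] <;> ring_nf <;> linarith
  have hyu2 : y - sgn (s κ) * u = c κ' := by
    rw [hu_def, hy_def]; rcases sgn_cases (s κ) with h | h <;> rw [h] <;> ring_nf <;> linarith
  have Fgt : ∀ j : Fin N, κ' < j →
      c κ < (p j).2 + sgn (s κ) * (p j).1 ∧ c κ' < (p j).2 - sgn (s κ) * (p j).1 := by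
    intro j hj
    have h1 := abs_lt.1 (key κ j (lt_trans hκκ'lt hj))
    have h2 := abs_lt.1 (key κ' j hj)
    have e1 : c κ = (p κ).2 + sgn (s κ) * (p κ).1 := hcval κ
    have e2 : c κ' = (p κ').2 - sgn (s κ) * (p κ').1 := by rw [hcval κ', hopp]; ring
    rcases sgn_cases (s κ) with h | h <;> rw [h] at e1 e2 ⊢ <;>
      exact ⟨by linarith [h1.1, h1.2], by linarith [h2.1, h2.2]⟩
  have Flt : ∀ j : Fin N, j < κ →
      (p j).2 + sgn (s κ) * (p j).1 < c κ ∧ (p j).2 - sgn (s κ) * (p j).1 < c κ' := by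
    intro j hj
    have h1 := abs_lt.1 (key j κ hj)
    have h2 := abs_lt.1 (key j κ' (lt_trans hj hκκ'lt))
    have e1 : c κ = (p κ).2 + sgn (s κ) * (p κ).1 := hcval κ
    have e2 : c κ' = (p κ').2 - sgn (s κ) * (p κ').1 := by rw [hcval κ', hopp]; ring
    rcases sgn_cases (s κ) with h | h <;> rw [h] at e1 e2 ⊢ <;>
      exact ⟨by linarith [h1.1, h1.2], by linarith [h2.1, h2.2]⟩
  have SLqR : ∀ j : Fin N, κ' < j → |(p j).1 - u| < (p j).2 - y := by
    intro j hj
    obtain ⟨hF1, hF2⟩ := Fgt j hj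
    rw [abs_lt]
    rcases sgn_cases (s κ) with h | h <;> rw [h] at hF1 hF2 hyu1 hyu2 <;>
      exact ⟨by linarith, by linarith⟩
  have SLqL : ∀ j : Fin N, j < κ → |(p j).1 - u| < y - (p j).2 := by
    intro j hj
    obtain ⟨hF1, hF2⟩ := Flt j hj
    rw [abs_lt]
    rcases sgn_cases (s κ) with h | h <;> rw [h] at hF1 hF2 hyu1 hyu2 <;>
      exact ⟨by linarith, by linarith⟩
  set v1 : Fin N → ℝ × ℝ := fun m =>
    if m = κ then (u - (p κ).1, -(sgn (s κ)) * (u - (p κ).1))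
    else if m = κ' then (u - (p κ').1, sgn (s κ) * (u - (p κ').1))
    else 0 with hv1_def
  have hv1κ : v1 κ = (u - (p κ).1, -(sgn (s κ)) * (u - (p κ).1)) := by
    rw [hv1_def]; simp
  have hv1κ' : v1 κ' = (u - (p κ').1, sgn (s κ) * (u - (p κ').1)) := by
    rw [hv1_def]; simp [hκκ'ne.symm]
  have hv1o : ∀ m, m ≠ κ → m ≠ κ' → v1 m = 0 := by
    intro m hm1 hm2; rw [hv1_def]; simp [hm1, hm2]
  have hq1κ : ((p + v1) κ).1 = u := by
    rw [Pi.add_apply, hv1κ]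
    show (p κ).1 + (u - (p κ).1) = u
    ring
  have hq2κ : ((p + v1) κ).2 = y := by
    rw [Pi.add_apply, hv1κ]
    show (p κ).2 + -(sgn (s κ)) * (u - (p κ).1) = y
    have e1 := hcval κ
    rcases sgn_cases (s κ) with h | h <;> rw [h] at e1 hyu1 ⊢ <;> linarith
  have hq1κ' : ((p + v1) κ').1 = u := by
    rw [Pi.add_apply, hv1κ']
    show (p κ').1 + (u - (p κ').1) = u
    ring
  have hq2κ' : ((p + v1) κ').2 = y := by
    rw [Pi.add_apply, hv1κ']
    show (p κ').2 + sgn (s κ) * (u - (p κ').1) = y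
    have e2 : c κ' = (p κ').2 - sgn (s κ) * (p κ').1 := by rw [hcval κ', hopp]; ring
    rcases sgn_cases (s κ) with h | h <;> rw [h] at e2 hyu2 ⊢ <;> linarith
  have hqo : ∀ m, m ≠ κ → m ≠ κ' → (p + v1) m = p m := by
    intro m hm1 hm2; rw [Pi.add_apply, hv1o m hm1 hm2, add_zero]
  -- weak space-like inequalities at the collision configuration q = p + v1
  have hqweak : ∀ i j : Fin N, i < j →
      |((p + v1) i).1 - ((p + v1) j).1| ≤ ((p + v1) j).2 - ((p + v1) i).2 := by
    intro i j hij
    by_cases hiκ : i = κ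
    · subst hiκ
      by_cases hjκ' : j = κ'
      · subst hjκ'; rw [hq1κ, hq1κ', hq2κ, hq2κ']; simp
      · have hj : κ' < j := by
          rcases hsplit j (ne_of_gt hij) hjκ' with h | h
          · exact absurd hij (not_lt.2 h.le)
          · exact h
        rw [hq1κ, hq2κ, hqo j (ne_of_gt (lt_trans hκκ'lt hj)) hjκ']
        have h := SLqR j hj
        rw [abs_sub_comm] at h
        exact h.le
    · by_cases hiκ' : i = κ'
      · subst hiκ'
        have hj : κ' < j := hij
        rw [hq1κ', hq2κ', hqo j (ne_of_gt (lt_trans hκκ'lt hj)) (ne_of_gt hj)]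
        have h := SLqR j hj
        rw [abs_sub_comm] at h
        exact h.le
      · rw [hqo i hiκ hiκ']
        by_cases hjκ : j = κ
        · subst hjκ
          rw [hq1κ, hq2κ]
          exact (SLqL i hij).le
        · by_cases hjκ' : j = κ'
          · subst hjκ'
            have hi : i < κ := by
              rcases hsplit i hiκ hiκ' with h | h
              · exact h
              · exact absurd hij (not_lt.2 h.le)
            rw [hq1κ', hq2κ']
            exact (SLqL i hi).le
          · rw [hqo j hjκ hjκ']
            exact (key i j hij).le
  have hform1 : ∀ (μ : ℝ) m, (p + μ • v1) m = (1 - μ) • (p m) + μ • ((p + v1) m) := by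
    intro μ m
    rw [Pi.add_apply, Pi.smul_apply, Pi.add_apply]
    exact combo_pt _ _ _
  have hS1p : ∀ μ : ℝ, μ ∈ Set.Ioo (0:ℝ) 1 → (p + μ • v1) ∈ S1 N := by
    intro μ hμ
    apply mem_S1_of_slt
    intro i j hij
    rw [hform1 μ i, hform1 μ j]
    exact slt_combo_left (key i j hij) (hqweak i j hij) hμ.1.le hμ.2
  have hv1prop : ∀ m, (v1 m).2 = -(sgn (s m)) * (v1 m).1 := by
    intro m
    by_cases h1 : m = κ
    · subst h1; rw [hv1κ]
    · by_cases h2 : m = κ'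
      · subst h2; rw [hv1κ']
        show sgn (s κ) * (u - (p κ').1) = -(sgn (s κ')) * (u - (p κ').1)
        rw [hopp]; ring
      · rw [hv1o m h1 h2]; simp
  obtain ⟨heq1, hpcl, hqcl⟩ := const_along (ψ s) (fun m => sgn (s m)) (hψ.1 s) (hψ.2.1 s)
    (hψ.2.2.1 s) p v1 hv1prop hS1p
  have hqC : (p + v1) ∈ Ckk N k hk := by
    simp only [Ckk, Set.mem_setOf_eq]
    refine ⟨hqcl, ?_, ?_⟩
    · rw [← hκdef, ← hκ'def, hq1κ, hq1κ']
    · rw [← hκdef, ← hκ'def, hq2κ, hq2κ']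
  have hphase : ψ s (p + v1)
      = Complex.exp (Complex.I * ((sgn (s κ) * φ k : ℝ) : ℂ)) *
        ψ (s ∘ Equiv.swap κ κ') (p + v1) := by
    by_cases hsb : s κ = true
    · have hsκ'false : s κ' = false := by
        cases hsk' : s κ'
        · rfl
        · exfalso; rw [hsb, hsk'] at hopp; norm_num [sgn] at hopp
      have hbc := hψ.2.2.2.1 k hk s (by rw [← hκdef]; exact hsb)
        (by rw [← hκ'def]; exact hsκ'false) (p + v1) hqC
      rw [← hκdef, ← hκ'def] at hbc
      have hsgn : sgn (s κ) = 1 := by rw [hsb]; simp [sgn]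
      rw [hsgn, show ((1 * φ k : ℝ) : ℂ) = (φ k : ℂ) by push_cast; ring]
      exact hbc
    · have hsb' : s κ = false := by
        cases h : s κ
        · rfl
        · exact absurd h hsb
      have hsκ'true : s κ' = true := by
        cases hsk' : s κ'
        · exfalso; rw [hsb', hsk'] at hopp; norm_num [sgn] at hopp
        · rfl
      have h1 : (s ∘ Equiv.swap κ κ') κ = true := by
        show s (Equiv.swap κ κ' κ) = true
        rw [hswκ]; exact hsκ'true
      have h2 : (s ∘ Equiv.swap κ κ') κ' = false := by
        show s (Equiv.swap κ κ' κ') = false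
        rw [hswκ']; exact hsb'
      have hbc := hψ.2.2.2.1 k hk (s ∘ Equiv.swap κ κ')
        (by rw [← hκdef]; exact h1) (by rw [← hκ'def]; exact h2) (p + v1) hqC
      rw [← hκdef, ← hκ'def] at hbc
      have hss : (s ∘ Equiv.swap κ κ') ∘ Equiv.swap κ κ' = s := by
        funext m
        show s (Equiv.swap κ κ' (Equiv.swap κ κ' m)) = s m
        rw [Equiv.swap_apply_self]
      rw [hss] at hbc
      have hsgn : sgn (s κ) = -1 := by rw [hsb']; simp [sgn]
      rw [hsgn]
      have hexp : Complex.exp (Complex.I * (((-1 : ℝ) * φ k : ℝ) : ℂ))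
          = (Complex.exp (Complex.I * (φ k : ℂ)))⁻¹ := by
        rw [show (((-1 : ℝ) * φ k : ℝ) : ℂ) = -(φ k : ℂ) by push_cast; ring, mul_neg,
          Complex.exp_neg]
      rw [hexp, hbc, ← mul_assoc, inv_mul_cancel₀ (Complex.exp_ne_zero _), one_mul]
  -- path 2 : from the time-zero configuration r to the collision configuration
  set T : Fin N → ℝ := fun m => if m = κ ∨ m = κ' then u else (p m).1 with hT_def
  have hTκ : T κ = u := by rw [hT_def]; simp
  have hTκ' : T κ' = u := by rw [hT_def]; simp
  have hTo : ∀ m, m ≠ κ → m ≠ κ' → T m = (p m).1 := by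
    intro m h1 h2; rw [hT_def]; simp [h1, h2]
  set v2 : Fin N → ℝ × ℝ := fun m => (T m, -(sgn (s (Equiv.swap κ κ' m))) * T m) with hv2_def
  set r : Fin N → ℝ × ℝ := fun m => ((0:ℝ), c (Equiv.swap κ κ' m)) with hr_def
  have hrm : ∀ m, r m = ((0:ℝ), c (Equiv.swap κ κ' m)) := fun m => by rw [hr_def]
  have hv2m : ∀ m, v2 m = (T m, -(sgn (s (Equiv.swap κ κ' m))) * T m) := fun m => by
    rw [hv2_def]
  have hv2prop : ∀ m, (v2 m).2 = -(sgn ((s ∘ Equiv.swap κ κ') m)) * (v2 m).1 := by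
    intro m; rw [hv2m m]; rfl
  have hrq : ∀ m, r m + v2 m = (p + v1) m := by
    intro m
    rw [hrm m, hv2m m]
    by_cases h1 : m = κ
    · subst h1
      rw [hswκ, hTκ]
      apply Prod.ext
      · show (0:ℝ) + u = ((p + v1) κ).1
        rw [hq1κ]; ring
      · show c κ' + -(sgn (s κ')) * u = ((p + v1) κ).2
        rw [hq2κ, hopp]
        rcases sgn_cases (s κ) with h | h <;> rw [h] at hyu2 ⊢ <;> linarith
    · by_cases h2 : m = κ'
      · subst h2
        rw [hswκ', hTκ']
        apply Prod.ext
        · show (0:ℝ) + u = ((p + v1) κ').1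
          rw [hq1κ']; ring
        · show c κ + -(sgn (s κ)) * u = ((p + v1) κ').2
          rw [hq2κ']
          rcases sgn_cases (s κ) with h | h <;> rw [h] at hyu1 ⊢ <;> linarith
      · rw [hswo m h1 h2, hTo m h1 h2, hqo m h1 h2]
        apply Prod.ext
        · show (0:ℝ) + (p m).1 = (p m).1
          ring
        · show c m + -(sgn (s m)) * (p m).1 = (p m).2
          linarith [hcval m]
  have hsorted' : ∀ i j : Fin N, i ≤ j → c (Equiv.swap κ κ' i) ≤ c (Equiv.swap κ κ' j) :=
    fun i j hij => hsorted i j hij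
  have hrweak : ∀ i j : Fin N, i < j → |(r i).1 - (r j).1| ≤ (r j).2 - (r i).2 := by
    intro i j hij
    rw [hrm i, hrm j]
    show |(0:ℝ) - 0| ≤ c (Equiv.swap κ κ' j) - c (Equiv.swap κ κ' i)
    simpa using sub_nonneg.2 (hsorted' i j hij.le)
  have hrsκκ' : |(r κ).1 - (r κ').1| < (r κ').2 - (r κ).2 := by
    rw [hrm κ, hrm κ']
    show |(0:ℝ) - 0| < c (Equiv.swap κ κ' κ') - c (Equiv.swap κ κ' κ)
    rw [hswκ, hswκ']
    simpa using sub_pos.2 hcc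
  have hqstrict : ∀ i j : Fin N, i < j → ¬(i = κ ∧ j = κ') →
      |((p + v1) i).1 - ((p + v1) j).1| < ((p + v1) j).2 - ((p + v1) i).2 := by
    intro i j hij hne
    by_cases hiκ : i = κ
    · subst hiκ
      have hjκ' : j ≠ κ' := fun h => hne ⟨rfl, h⟩
      have hj : κ' < j := by
        rcases hsplit j (ne_of_gt hij) hjκ' with h | h
        · exact absurd hij (not_lt.2 h.le)
        · exact h
      rw [hq1κ, hq2κ, hqo j (ne_of_gt (lt_trans hκκ'lt hj)) hjκ']
      have h := SLqR j hj
      rw [abs_sub_comm] at h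
      exact h
    · by_cases hiκ' : i = κ'
      · subst hiκ'
        have hj : κ' < j := hij
        rw [hq1κ', hq2κ', hqo j (ne_of_gt (lt_trans hκκ'lt hj)) (ne_of_gt hj)]
        have h := SLqR j hj
        rw [abs_sub_comm] at h
        exact h
      · rw [hqo i hiκ hiκ']
        by_cases hjκ : j = κ
        · subst hjκ
          rw [hq1κ, hq2κ]
          exact SLqL i hij
        · by_cases hjκ' : j = κ'
          · subst hjκ'
            have hi : i < κ := by
              rcases hsplit i hiκ hiκ' with h | h
              · exact h
              · exact absurd hij (not_lt.2 h.le)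
            rw [hq1κ', hq2κ']
            exact SLqL i hi
          · rw [hqo j hjκ hjκ']
            exact key i j hij
  have hform2 : ∀ (μ : ℝ) m, (r + μ • v2) m = (1 - μ) • (r m) + μ • ((p + v1) m) := by
    intro μ m
    rw [Pi.add_apply, Pi.smul_apply, combo_pt, hrq m]
  have hS2p : ∀ μ : ℝ, μ ∈ Set.Ioo (0:ℝ) 1 → (r + μ • v2) ∈ S1 N := by
    intro μ hμ
    apply mem_S1_of_slt
    intro i j hij
    rw [hform2 μ i, hform2 μ j]
    by_cases hcase : i = κ ∧ j = κ'
    · obtain ⟨e1, e2⟩ := hcase; subst e1; subst e2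
      refine slt_combo_left hrsκκ' ?_ hμ.1.le hμ.2
      rw [hq1κ, hq1κ', hq2κ, hq2κ']; simp
    · exact slt_combo_right (hrweak i j hij) (hqstrict i j hij hcase) hμ.1 hμ.2.le
  obtain ⟨heq2, hrcl, _⟩ := const_along (ψ (s ∘ Equiv.swap κ κ'))
    (fun m => sgn ((s ∘ Equiv.swap κ κ') m))
    (hψ.1 _) (hψ.2.1 _) (hψ.2.2.1 _) r v2 hv2prop hS2p
  have hrq' : r + v2 = p + v1 := by funext m; exact hrq m
  rw [hrq'] at heq2
  have hinit := hψ.2.2.2.2 (s ∘ Equiv.swap κ κ') (fun m => c (Equiv.swap κ κ' m))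
    (fun i j hij => hsorted' i j hij)
  have hrinit : ψ (s ∘ Equiv.swap κ κ') r
      = g (s ∘ Equiv.swap κ κ') (fun m => c (Equiv.swap κ κ' m)) := by
    rw [hr_def]; exact hinit
  have hgarg : (fun m => (p (Equiv.swap κ κ' m)).2
        + sgn (s (Equiv.swap κ κ' m)) * (p (Equiv.swap κ κ' m)).1)
      = fun m => c (Equiv.swap κ κ' m) := by
    funext m; exact (hcval _).symm
  rw [hgarg, heq1, hphase, ← heq2, hrinit]

lemma weak_of_mem_closure {N : ℕ} {x : Fin N → ℝ × ℝ} (hx : x ∈ closure (S1 N)) :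
    ∀ i j : Fin N, i < j → |(x i).1 - (x j).1| ≤ (x j).2 - (x i).2 := by
  intro i j hij
  have hcl : IsClosed {y : Fin N → ℝ × ℝ | |(y i).1 - (y j).1| ≤ (y j).2 - (y i).2} :=
    isClosed_le (((continuous_apply i).fst.sub (continuous_apply j).fst).abs)
      ((continuous_apply j).snd.sub (continuous_apply i).snd)
  exact closure_minimal (fun y hy => (slt_of_mem_S1 hy i j hij).le) hcl hx


/-- single-collision case of the explicit solution formula: if `(ψ_s)`
solves the initial-boundary value problem with data `g`, `p ∈ closure S₁`, the
characteristic values `c_k = z_k + s_k t_k` satisfy `c_k > c_{k+1}` for one `k`, and the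
list obtained by interchanging `c_k` and `c_{k+1}` is nondecreasing, then
`ψ_s(p) = e^{i s_k φ^{(k)}} g_{τ_k s}(c₁,…,c_{k+1},c_k,…,c_N)`. (0-based `k`, `k+1 < N`.) -/
theorem stmt13 (N : ℕ) (hN : 2 ≤ N) (φ : ℕ → ℝ)
    (g : (Fin N → Bool) → (Fin N → ℝ) → ℂ)
    (ψ : (Fin N → Bool) → (Fin N → ℝ × ℝ) → ℂ)
    (hψ : IsSolution N φ g ψ)
    (p : Fin N → ℝ × ℝ) (hp : p ∈ closure (S1 N)) (s : Fin N → Bool)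
    (k : ℕ) (hk : k + 1 < N)
    (hcoll : (p ⟨k, Nat.lt_of_succ_lt hk⟩).2
          + sgn (s ⟨k, Nat.lt_of_succ_lt hk⟩) * (p ⟨k, Nat.lt_of_succ_lt hk⟩).1
        > (p ⟨k + 1, hk⟩).2 + sgn (s ⟨k + 1, hk⟩) * (p ⟨k + 1, hk⟩).1)
    (hsorted : ∀ i j : Fin N, i ≤ j →
      (fun m => (p (Equiv.swap ⟨k, Nat.lt_of_succ_lt hk⟩ ⟨k + 1, hk⟩ m)).2
          + sgn (s (Equiv.swap ⟨k, Nat.lt_of_succ_lt hk⟩ ⟨k + 1, hk⟩ m))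
            * (p (Equiv.swap ⟨k, Nat.lt_of_succ_lt hk⟩ ⟨k + 1, hk⟩ m)).1) i
        ≤ (fun m => (p (Equiv.swap ⟨k, Nat.lt_of_succ_lt hk⟩ ⟨k + 1, hk⟩ m)).2
          + sgn (s (Equiv.swap ⟨k, Nat.lt_of_succ_lt hk⟩ ⟨k + 1, hk⟩ m))
            * (p (Equiv.swap ⟨k, Nat.lt_of_succ_lt hk⟩ ⟨k + 1, hk⟩ m)).1) j) :
    ψ s p = Complex.exp (Complex.I * ((sgn (s ⟨k, Nat.lt_of_succ_lt hk⟩) * φ k : ℝ) : ℂ)) *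
      g (s ∘ Equiv.swap ⟨k, Nat.lt_of_succ_lt hk⟩ ⟨k + 1, hk⟩)
        (fun m => (p (Equiv.swap ⟨k, Nat.lt_of_succ_lt hk⟩ ⟨k + 1, hk⟩ m)).2
          + sgn (s (Equiv.swap ⟨k, Nat.lt_of_succ_lt hk⟩ ⟨k + 1, hk⟩ m))
            * (p (Equiv.swap ⟨k, Nat.lt_of_succ_lt hk⟩ ⟨k + 1, hk⟩ m)).1) := by
  set κ : Fin N := ⟨k, Nat.lt_of_succ_lt hk⟩ with hκdef
  set κ' : Fin N := ⟨k + 1, hk⟩ with hκ'def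
  have hκκ'lt : κ < κ' := by rw [hκdef, hκ'def]; exact Fin.mk_lt_mk.2 (Nat.lt_succ_self k)
  have hκκ'ne : κ ≠ κ' := ne_of_lt hκκ'lt
  have hswκ : Equiv.swap κ κ' κ = κ' := Equiv.swap_apply_left κ κ'
  have hswκ' : Equiv.swap κ κ' κ' = κ := Equiv.swap_apply_right κ κ'
  have hswo : ∀ m : Fin N, m ≠ κ → m ≠ κ' → Equiv.swap κ κ' m = m :=
    fun m h1 h2 => Equiv.swap_apply_of_ne_of_ne h1 h2
  have hsplit : ∀ j : Fin N, j ≠ κ → j ≠ κ' → j < κ ∨ κ' < j := by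
    intro j h1 h2
    have e1 : (j : ℕ) ≠ k := by
      intro h; exact h1 (by rw [hκdef]; exact Fin.ext h)
    have e2 : (j : ℕ) ≠ k + 1 := by
      intro h; exact h2 (by rw [hκ'def]; exact Fin.ext h)
    rcases Nat.lt_or_ge (j : ℕ) k with h | h
    · left; rw [hκdef]; exact Fin.lt_def.2 (by simpa using h)
    · right; rw [hκ'def]; refine Fin.lt_def.2 ?_
      show k + 1 < (j : ℕ)
      omega
  have hvalκ : ((κ : Fin N) : ℕ) = k := by rw [hκdef]
  have hvalκ' : ((κ' : Fin N) : ℕ) = k + 1 := by rw [hκ'def]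
  set c : Fin N → ℝ := fun m => (p m).2 + sgn (s m) * (p m).1 with hcdef
  have hcval : ∀ m, c m = (p m).2 + sgn (s m) * (p m).1 := fun m => by rw [hcdef]
  have hcc : c κ > c κ' := hcoll
  have hD : (0:ℝ) < c κ - c κ' := sub_pos.2 hcc
  have hweak := weak_of_mem_closure hp
  have hsorted' : ∀ i j : Fin N, i ≤ j → c (Equiv.swap κ κ' i) ≤ c (Equiv.swap κ κ' j) :=
    fun i j hij => hsorted i j hij
  have hswnat : ∀ i j : Fin N, i < j → ¬(i = κ ∧ j = κ') →
      ((Equiv.swap κ κ' i : Fin N) : ℕ) < ((Equiv.swap κ κ' j : Fin N) : ℕ) := by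
    intro i j hij hne
    by_cases hiκ : i = κ
    · subst hiκ
      have hjκ' : j ≠ κ' := fun h => hne ⟨rfl, h⟩
      have hj : κ' < j := by
        rcases hsplit j (ne_of_gt hij) hjκ' with h | h
        · exact absurd hij (not_lt.2 h.le)
        · exact h
      rw [hswκ, hswo j (ne_of_gt (lt_trans hκκ'lt hj)) hjκ']
      exact Fin.lt_def.1 hj
    · by_cases hiκ' : i = κ'
      · subst hiκ'
        have hj : κ' < j := hij
        rw [hswκ', hswo j (ne_of_gt (lt_trans hκκ'lt hj)) (ne_of_gt hj)]
        exact Fin.lt_def.1 (lt_trans hκκ'lt hj)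
      · rw [hswo i hiκ hiκ']
        by_cases hjκ : j = κ
        · subst hjκ; rw [hswκ]; exact Fin.lt_def.1 (lt_trans hij hκκ'lt)
        · by_cases hjκ' : j = κ'
          · subst hjκ'
            have hi : i < κ := by
              rcases hsplit i hiκ hiκ' with h | h
              · exact h
              · exact absurd hij (not_lt.2 h.le)
            rw [hswκ']
            exact Fin.lt_def.1 hi
          · rw [hswo j hjκ hjκ']; exact Fin.lt_def.1 hij
  set δ : ℕ → ℝ := fun n => (c κ - c κ') / (n + 2) with hδdef
  have hδval : ∀ n : ℕ, δ n = (c κ - c κ') / (n + 2) := fun n => by rw [hδdef]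
  have hδpos : ∀ n : ℕ, 0 < δ n := by
    intro n; rw [hδval n]; positivity
  have hδltD : ∀ n : ℕ, δ n < c κ - c κ' := by
    intro n; rw [hδval n]
    rw [div_lt_iff₀ (by positivity : (0:ℝ) < (n:ℝ) + 2)]
    nlinarith [hD, (Nat.cast_nonneg n : (0:ℝ) ≤ (n:ℝ))]
  have hδ0 : Tendsto δ atTop (𝓝 0) := by
    have heq : δ = fun n : ℕ => (c κ - c κ') * (1/((n:ℝ)+2)) := by
      funext n; rw [hδval n]; ring
    rw [heq]
    simpa using seq0_tendsto.const_mul (c κ - c κ')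
  set P : ℕ → (Fin N → ℝ × ℝ) := fun n m => ((p m).1, (p m).2 + δ n * ((m : ℕ) : ℝ)) with hPdef
  have hPm : ∀ n m, P n m = ((p m).1, (p m).2 + δ n * ((m : ℕ) : ℝ)) := fun n m => by rw [hPdef]
  have hPS1 : ∀ n, P n ∈ S1 N := by
    intro n
    apply mem_S1_of_slt
    intro i j hij
    rw [hPm n i, hPm n j]
    show |(p i).1 - (p j).1| < ((p j).2 + δ n * ((j:ℕ):ℝ)) - ((p i).2 + δ n * ((i:ℕ):ℝ))
    have h1 := hweak i j hij
    have h2 : ((i:ℕ):ℝ) < ((j:ℕ):ℝ) := by exact_mod_cast Fin.lt_def.1 hij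
    have h3 := mul_lt_mul_of_pos_left h2 (hδpos n)
    linarith
  have hcP : ∀ n m, (P n m).2 + sgn (s m) * (P n m).1 = c m + δ n * ((m:ℕ):ℝ) := by
    intro n m; rw [hPm n m]
    show ((p m).2 + δ n * ((m:ℕ):ℝ)) + sgn (s m) * (p m).1 = c m + δ n * ((m:ℕ):ℝ)
    rw [hcval m]; ring
  have hsortP : ∀ n, ∀ i j : Fin N, i < j →
      c (Equiv.swap κ κ' i) + δ n * ((Equiv.swap κ κ' i : ℕ) : ℝ)
        < c (Equiv.swap κ κ' j) + δ n * ((Equiv.swap κ κ' j : ℕ) : ℝ) := by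
    intro n i j hij
    by_cases hcase : i = κ ∧ j = κ'
    · obtain ⟨e1, e2⟩ := hcase; subst e1; subst e2
      rw [hswκ, hswκ', hvalκ, hvalκ']
      have := hδltD n
      push_cast
      linarith
    · have h1 := hsorted' i j hij.le
      have h2 : ((Equiv.swap κ κ' i : ℕ) : ℝ) < ((Equiv.swap κ κ' j : ℕ) : ℝ) := by
        exact_mod_cast hswnat i j hij hcase
      have h3 := mul_lt_mul_of_pos_left h2 (hδpos n)
      linarith
  have hEn : ∀ n, ψ s (P n) = Complex.exp (Complex.I * ((sgn (s κ) * φ k : ℝ) : ℂ)) *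
      g (s ∘ Equiv.swap κ κ') (fun m => (P n (Equiv.swap κ κ' m)).2
        + sgn (s (Equiv.swap κ κ' m)) * (P n (Equiv.swap κ κ' m)).1) := by
    intro n
    refine stmt13_strict N φ g ψ hψ (P n) (hPS1 n) s k hk ?_ ?_
    · show (P n κ).2 + sgn (s κ) * (P n κ).1 > (P n κ').2 + sgn (s κ') * (P n κ').1
      rw [hcP n κ, hcP n κ', hvalκ, hvalκ']
      have := hδltD n
      push_cast
      linarith
    · show ∀ i j : Fin N, i ≤ j →
        (fun m => (P n (Equiv.swap κ κ' m)).2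
          + sgn (s (Equiv.swap κ κ' m)) * (P n (Equiv.swap κ κ' m)).1) i
        ≤ (fun m => (P n (Equiv.swap κ κ' m)).2
          + sgn (s (Equiv.swap κ κ' m)) * (P n (Equiv.swap κ κ' m)).1) j
      intro i j hij
      show (P n (Equiv.swap κ κ' i)).2 + sgn (s (Equiv.swap κ κ' i)) * (P n (Equiv.swap κ κ' i)).1
        ≤ (P n (Equiv.swap κ κ' j)).2 + sgn (s (Equiv.swap κ κ' j)) * (P n (Equiv.swap κ κ' j)).1
      rw [hcP n (Equiv.swap κ κ' i), hcP n (Equiv.swap κ κ' j)]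
      rcases eq_or_lt_of_le hij with h | h
      · subst h; exact le_refl _
      · exact (hsortP n i j h).le
  have hPtend : Tendsto P atTop (𝓝 p) := by
    rw [tendsto_pi_nhds]
    intro m
    have heqf : (fun n => P n m) = fun n => ((p m).1, (p m).2 + δ n * ((m:ℕ):ℝ)) := by
      funext n; rw [hPm]
    rw [heqf]
    have h2 : Tendsto (fun n => (p m).2 + δ n * ((m:ℕ):ℝ)) atTop (𝓝 ((p m).2)) := by
      have hh : Tendsto (fun n => (p m).2 + δ n * ((m:ℕ):ℝ)) atTop
          (𝓝 ((p m).2 + 0 * ((m:ℕ):ℝ))) :=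
        (tendsto_const_nhds (x := (p m).2) (f := atTop)).add (hδ0.mul_const ((m:ℕ):ℝ))
      simpa using hh
    have := (tendsto_const_nhds (x := (p m).1) (f := atTop)).prodMk_nhds h2
    simpa using this
  have hLHS : Tendsto (fun n => ψ s (P n)) atTop (𝓝 (ψ s p)) := by
    refine ((hψ.1 s p hp).tendsto).comp ?_
    exact tendsto_nhdsWithin_of_tendsto_nhds_of_eventually_within _ hPtend
      (Filter.Eventually.of_forall fun n => subset_closure (hPS1 n))
  set Q : ℕ → (Fin N → ℝ × ℝ) := fun n m =>
    ((0:ℝ), c (Equiv.swap κ κ' m) + δ n * ((Equiv.swap κ κ' m : ℕ):ℝ)) with hQdef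
  have hQm : ∀ n m, Q n m
      = ((0:ℝ), c (Equiv.swap κ κ' m) + δ n * ((Equiv.swap κ κ' m : ℕ):ℝ)) :=
    fun n m => by rw [hQdef]
  have hQS1 : ∀ n, Q n ∈ S1 N := by
    intro n; apply mem_S1_of_slt; intro i j hij
    rw [hQm n i, hQm n j]
    show |(0:ℝ) - 0|
      < (c (Equiv.swap κ κ' j) + δ n * ((Equiv.swap κ κ' j : ℕ):ℝ))
        - (c (Equiv.swap κ κ' i) + δ n * ((Equiv.swap κ κ' i : ℕ):ℝ))
    have h0 : |(0:ℝ) - 0| = 0 := by simp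
    rw [h0]
    linarith [hsortP n i j hij]
  have hQtend : Tendsto Q atTop (𝓝 (fun m => ((0:ℝ), c (Equiv.swap κ κ' m)))) := by
    rw [tendsto_pi_nhds]
    intro m
    have heqf : (fun n => Q n m)
        = fun n => ((0:ℝ), c (Equiv.swap κ κ' m) + δ n * ((Equiv.swap κ κ' m : ℕ):ℝ)) := by
      funext n; rw [hQm]
    rw [heqf]
    have h2 : Tendsto (fun n => c (Equiv.swap κ κ' m) + δ n * ((Equiv.swap κ κ' m : ℕ):ℝ))
        atTop (𝓝 (c (Equiv.swap κ κ' m))) := by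
      have hh : Tendsto
          (fun n => c (Equiv.swap κ κ' m) + δ n * ((Equiv.swap κ κ' m : ℕ):ℝ)) atTop
          (𝓝 (c (Equiv.swap κ κ' m) + 0 * ((Equiv.swap κ κ' m : ℕ):ℝ))) :=
        (tendsto_const_nhds (x := c (Equiv.swap κ κ' m)) (f := atTop)).add
          (hδ0.mul_const ((Equiv.swap κ κ' m : ℕ):ℝ))
      simpa using hh
    exact (tendsto_const_nhds (x := (0:ℝ)) (f := atTop)).prodMk_nhds h2
  have hQcl : (fun m => ((0:ℝ), c (Equiv.swap κ κ' m))) ∈ closure (S1 N) :=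
    mem_closure_of_tendsto hQtend (Filter.Eventually.of_forall hQS1)
  have hginitn : ∀ n, g (s ∘ Equiv.swap κ κ')
      (fun m => c (Equiv.swap κ κ' m) + δ n * ((Equiv.swap κ κ' m : ℕ):ℝ))
      = ψ (s ∘ Equiv.swap κ κ') (Q n) := by
    intro n
    have hsw : ∀ i j : Fin N, i ≤ j →
        (fun m => c (Equiv.swap κ κ' m) + δ n * ((Equiv.swap κ κ' m : ℕ):ℝ)) i
        ≤ (fun m => c (Equiv.swap κ κ' m) + δ n * ((Equiv.swap κ κ' m : ℕ):ℝ)) j := by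
      intro i j hij
      rcases eq_or_lt_of_le hij with h | h
      · subst h; exact le_refl _
      · exact (hsortP n i j h).le
    have h := hψ.2.2.2.2 (s ∘ Equiv.swap κ κ')
      (fun m => c (Equiv.swap κ κ' m) + δ n * ((Equiv.swap κ κ' m : ℕ):ℝ)) hsw
    exact h.symm
  have hψQ : Tendsto (fun n => ψ (s ∘ Equiv.swap κ κ') (Q n)) atTop
      (𝓝 (ψ (s ∘ Equiv.swap κ κ') (fun m => ((0:ℝ), c (Equiv.swap κ κ' m))))) := by
    refine ((hψ.1 _ _ hQcl).tendsto).comp ?_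
    exact tendsto_nhdsWithin_of_tendsto_nhds_of_eventually_within _ hQtend
      (Filter.Eventually.of_forall fun n => subset_closure (hQS1 n))
  have hglimit : ψ (s ∘ Equiv.swap κ κ') (fun m => ((0:ℝ), c (Equiv.swap κ κ' m)))
      = g (s ∘ Equiv.swap κ κ') (fun m => c (Equiv.swap κ κ' m)) :=
    hψ.2.2.2.2 _ _ (fun i j hij => hsorted' i j hij)
  have hEn' : (fun n => ψ s (P n))
      = fun n => Complex.exp (Complex.I * ((sgn (s κ) * φ k : ℝ) : ℂ)) *
        ψ (s ∘ Equiv.swap κ κ') (Q n) := by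
    funext n
    rw [hEn n]
    congr 1
    rw [← hginitn n]
    congr 1
    funext m
    rw [hcP n (Equiv.swap κ κ' m)]
  have hRHS : Tendsto (fun n => ψ s (P n)) atTop
      (𝓝 (Complex.exp (Complex.I * ((sgn (s κ) * φ k : ℝ) : ℂ)) *
        g (s ∘ Equiv.swap κ κ') (fun m => c (Equiv.swap κ κ' m)))) := by
    have h := hψQ.const_mul (Complex.exp (Complex.I * ((sgn (s κ) * φ k : ℝ) : ℂ)))
    rw [hglimit] at h
    rw [hEn']
    exact h
  have hgarg : (fun m => (p (Equiv.swap κ κ' m)).2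
        + sgn (s (Equiv.swap κ κ' m)) * (p (Equiv.swap κ κ' m)).1)
      = fun m => c (Equiv.swap κ κ' m) := by
    funext m; exact (hcval _).symm
  rw [hgarg]
  exact tendsto_nhds_unique hLHS hRHS

end Aux
end
end

section
/- Let φ ∈ ℝ and for (s_1,s_2) ∈ {−1,+1}² let g_{s_1 s_2} : {(z_1,z_2) ∈ ℝ² : z_1 ≤ z_2} → ℂ. Assume: (i) g_{++} and g_{−−} are restrictions of continuously differentiable functions on ℝ²; (ii) the functions G_{+−}, G_{−+} : ℝ² → ℂ defined by G_{+−}(c_1,c_2) := g_{+−}(c_1,c_2) for c_1 ≤ c_2 and G_{+−}(c_1,c_2) := e^{iφ} g_{−+}(c_2,c_1) for c_1 > c_2, and by G_{−+}(c_1,c_2) := g_{−+}(c_1,c_2) for c_1 ≤ c_2 and G_{−+}(c_1,c_2) := e^{−iφ} g_{+−}(c_2,c_1) for c_1 > c_2, are continuously differentiable on ℝ². Define on S̄_1 (with N = 2): ψ_{++}(t_1,z_1,t_2,z_2) := g_{++}(z_1+t_1, z_2+t_2), ψ_{−−}(t_1,z_1,t_2,z_2) := g_{−−}(z_1−t_1,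 z_2−t_2), ψ_{+−}(t_1,z_1,t_2,z_2) := G_{+−}(z_1+t_1, z_2−t_2), ψ_{−+}(t_1,z_1,t_2,z_2) := G_{−+}(z_1−t_1, z_2+t_2) (the first two are well defined since on S̄_1 one has z_1+t_1 ≤ z_2+t_2 and z_1−t_1 ≤ z_2−t_2). Then each ψ_{s_1 s_2} is continuous on S̄_1 and continuously differentiable on S_1, satisfies the multi-time transport equations for (s_1,s_2) on S_1, the boundary condition ψ_{+−}(p) = e^{iφ} ψ_{−+}(p) holds for every p ∈ C_{1,2}, and ψ_{s_1 s_2}(0,z_1,0,z_2) = g_{s_1 s_2}(z_1,z_2) for all z_1 ≤ z_2. (Existence and explicit solution of the two-particle model.) -/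
noncomputable section

/-- The coincidence set `C_{1,2}` for `N = 2`. -/
def C12 : Set (Fin 2 → ℝ × ℝ) :=
  {x ∈ closure (S1 2) | (x 0).1 = (x 1).1 ∧ (x 0).2 = (x 1).2}

def L' (a b : ℝ) : (Fin 2 → ℝ × ℝ) →L[ℝ] ℝ × ℝ :=
  ((ContinuousLinearMap.snd ℝ ℝ ℝ + a • ContinuousLinearMap.fst ℝ ℝ ℝ).comp
      (ContinuousLinearMap.proj 0)).prod
    ((ContinuousLinearMap.snd ℝ ℝ ℝ + b • ContinuousLinearMap.fst ℝ ℝ ℝ).comp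
      (ContinuousLinearMap.proj 1))

@[simp] lemma L'_apply (a b : ℝ) (x : Fin 2 → ℝ × ℝ) :
    L' a b x = ((x 0).2 + a * (x 0).1, (x 1).2 + b * (x 1).1) := by
  simp [L', smul_eq_mul]

lemma isOpen_S1 : IsOpen (S1 2) := by
  have h : S1 2 = {x : Fin 2 → ℝ × ℝ |
      ((x 0).1 - (x 1).1) ^ 2 < ((x 0).2 - (x 1).2) ^ 2} ∩ {x | (x 0).2 < (x 1).2} := by
    ext x
    constructor
    · rintro ⟨h1, h2⟩; exact ⟨h1 0 1 (by decide), h2 0 1 (by decide)⟩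
    · rintro ⟨h1, h2⟩
      refine ⟨fun j k hjk => ?_, fun j k hjk => ?_⟩
      · fin_cases j <;> fin_cases k <;> simp_all <;> nlinarith
      · fin_cases j <;> fin_cases k <;> simp_all
  rw [h]
  exact ((isOpen_lt (by fun_prop) (by fun_prop)).inter (isOpen_lt (by fun_prop) (by fun_prop)))

lemma closure_S1_sub (a : ℝ) (ha : a = 1 ∨ a = -1) :
    closure (S1 2) ⊆ {x | (x 0).2 + a * (x 0).1 ≤ (x 1).2 + a * (x 1).1} := by
  apply closure_minimal
  · rintro x ⟨h1, h2⟩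
    have h1' := h1 0 1 (by decide)
    have h2' := h2 0 1 (by decide)
    rcases ha with rfl | rfl <;> simp only [Set.mem_setOf_eq] <;> nlinarith
  · exact isClosed_le (by fun_prop) (by fun_prop)

lemma transport_comp' (a b : ℝ) (G : ℝ × ℝ → ℂ) (hG : ContDiff ℝ 1 G)
    (ψ : (Fin 2 → ℝ × ℝ) → ℂ) (hψ : ∀ x ∈ closure (S1 2), ψ x = G (L' a b x)) :
    ∀ p ∈ S1 2, ∀ k : Fin 2,
      fderiv ℝ ψ p (Pi.single k ((1:ℝ),(0:ℝ)))
        = (![a, b] k) • fderiv ℝ ψ p (Pi.single k ((0:ℝ),(1:ℝ))) := by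
  intro p hp k
  have hnb : ψ =ᶠ[nhds p] (G ∘ L' a b) :=
    Filter.eventuallyEq_of_mem (isOpen_S1.mem_nhds hp)
      (fun x hx => hψ x (subset_closure hx))
  rw [hnb.fderiv_eq]
  have hd : fderiv ℝ (G ∘ L' a b) p = (fderiv ℝ G (L' a b p)).comp (L' a b) := by
    rw [fderiv_comp p (hG.differentiable one_ne_zero).differentiableAt
      (L' a b).differentiableAt, (L' a b).fderiv]
  rw [hd]
  set D := fderiv ℝ G (L' a b p)
  fin_cases k
  · have h1 : L' a b (Pi.single (0 : Fin 2) ((1:ℝ),(0:ℝ))) = a • ((1:ℝ),(0:ℝ)) := by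
      simp [Prod.smul_def]
    have h2 : L' a b (Pi.single (0 : Fin 2) ((0:ℝ),(1:ℝ))) = ((1:ℝ),(0:ℝ)) := by simp
    simp only [ContinuousLinearMap.comp_apply, h1, h2, map_smul]
    simp
    simpa [Prod.smul_def, Complex.real_smul] using D.map_smul a ((1:ℝ),(0:ℝ))
  · have h1 : L' a b (Pi.single (1 : Fin 2) ((1:ℝ),(0:ℝ))) = b • ((0:ℝ),(1:ℝ)) := by
      simp [Prod.smul_def]
    have h2 : L' a b (Pi.single (1 : Fin 2) ((0:ℝ),(1:ℝ))) = ((0:ℝ),(1:ℝ)) := by simp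
    simp only [ContinuousLinearMap.comp_apply, h1, h2, map_smul]
    simp
    simpa [Prod.smul_def, Complex.real_smul] using D.map_smul b ((0:ℝ),(1:ℝ))

lemma boundary_lemma (φ : ℝ) (gpm gmp Gpm Gmp : ℝ × ℝ → ℂ)
    (hGpm1 : ∀ c : ℝ × ℝ, c.1 ≤ c.2 → Gpm c = gpm c)
    (hGpm2 : ∀ c : ℝ × ℝ, c.2 < c.1 → Gpm c = Complex.exp (Complex.I * (φ : ℂ)) * gmp (c.2, c.1))
    (hGmp1 : ∀ c : ℝ × ℝ, c.1 ≤ c.2 → Gmp c = gmp c)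
    (hGmp2 : ∀ c : ℝ × ℝ, c.2 < c.1 → Gmp c = Complex.exp (-(Complex.I * (φ : ℂ))) * gpm (c.2, c.1))
    (hGpm : ContDiff ℝ 1 Gpm) (hGmp : ContDiff ℝ 1 Gmp) :
    ∀ t z : ℝ, Gpm (z + t, z - t) = Complex.exp (Complex.I * (φ : ℂ)) * Gmp (z - t, z + t) := by
  have key : Complex.exp (Complex.I * (φ : ℂ)) * Complex.exp (-(Complex.I * (φ : ℂ))) = 1 := by
    rw [← Complex.exp_add]; simp
  have pos : ∀ t z : ℝ, 0 < t →
      Gpm (z + t, z - t) = Complex.exp (Complex.I * (φ : ℂ)) * Gmp (z - t, z + t) := by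
    intro t z ht
    rw [hGpm2 (z + t, z - t) (by dsimp; linarith), hGmp1 (z - t, z + t) (by dsimp; linarith)]
  intro t z
  rcases lt_trichotomy t 0 with ht | rfl | ht
  · rw [hGpm1 (z + t, z - t) (by dsimp; linarith),
      hGmp2 (z - t, z + t) (by dsimp; linarith)]
    dsimp
    rw [← mul_assoc, key, one_mul]
  · have hfc : Continuous (fun s : ℝ => Gpm (z + s, z - s)) :=
      hGpm.continuous.comp (by fun_prop)
    have hgc : Continuous (fun s : ℝ =>
        Complex.exp (Complex.I * (φ : ℂ)) * Gmp (z - s, z + s)) :=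
      continuous_const.mul (hGmp.continuous.comp (by fun_prop))
    have heq : Set.EqOn (fun s : ℝ => Gpm (z + s, z - s))
        (fun s : ℝ => Complex.exp (Complex.I * (φ : ℂ)) * Gmp (z - s, z + s))
        (Set.Ioi (0:ℝ)) := fun s hs => pos s z hs
    have := (heq.closure hfc hgc) (by rw [closure_Ioi]; exact Set.self_mem_Ici)
    simpa using this
  · exact pos t z ht

/-- existence and explicit solution of the two-particle model: given
boundary phase `φ`, initial data `g_{±±}` (given on `{z₁ ≤ z₂}`, encoded as total
functions only constrained there) such that `g_{++}`, `g_{−−}` are restrictions of `C¹`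
functions `Gpp`, `Gmm`, and such that the case-defined continuations `Gpm`, `Gmp`
(`Gpm(c₁,c₂) = g_{+−}(c₁,c₂)` for `c₁ ≤ c₂`, `= e^{iφ} g_{−+}(c₂,c₁)` for `c₁ > c₂`; and
`Gmp(c₁,c₂) = g_{−+}(c₁,c₂)` for `c₁ ≤ c₂`, `= e^{−iφ} g_{+−}(c₂,c₁)` for `c₁ > c₂`) are
`C¹` on `ℝ²`, the functions
`ψ_{++}(t₁,z₁,t₂,z₂) = g_{++}(z₁+t₁, z₂+t₂)`, `ψ_{−−}(t₁,z₁,t₂,z₂) = g_{−−}(z₁−t₁, z₂−t₂)`,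
`ψ_{+−}(t₁,z₁,t₂,z₂) = Gpm(z₁+t₁, z₂−t₂)`, `ψ_{−+}(t₁,z₁,t₂,z₂) = Gmp(z₁−t₁, z₂+t₂)`
are continuous on the closure of `S₁`, `C¹` on `S₁`, satisfy the respective multi-time
transport equations on `S₁`, the boundary condition `ψ_{+−} = e^{iφ} ψ_{−+}` on `C_{1,2}`,
and the initial conditions. -/
theorem stmt14 (φ : ℝ) (gpp gpm gmp gmm Gpp Gmm Gpm Gmp : ℝ × ℝ → ℂ)
    (hGpp : ContDiff ℝ 1 Gpp) (hGmm : ContDiff ℝ 1 Gmm)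
    (hgppG : ∀ c : ℝ × ℝ, c.1 ≤ c.2 → gpp c = Gpp c)
    (hgmmG : ∀ c : ℝ × ℝ, c.1 ≤ c.2 → gmm c = Gmm c)
    (hGpm1 : ∀ c : ℝ × ℝ, c.1 ≤ c.2 → Gpm c = gpm c)
    (hGpm2 : ∀ c : ℝ × ℝ, c.2 < c.1 → Gpm c = Complex.exp (Complex.I * (φ : ℂ)) * gmp (c.2, c.1))
    (hGmp1 : ∀ c : ℝ × ℝ, c.1 ≤ c.2 → Gmp c = gmp c)
    (hGmp2 : ∀ c : ℝ × ℝ, c.2 < c.1 → Gmp c = Complex.exp (-(Complex.I * (φ : ℂ))) * gpm (c.2, c.1))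
    (hGpm : ContDiff ℝ 1 Gpm) (hGmp : ContDiff ℝ 1 Gmp)
    (ψpp ψpm ψmp ψmm : (Fin 2 → ℝ × ℝ) → ℂ)
    (hψpp : ∀ x : Fin 2 → ℝ × ℝ, ψpp x = gpp ((x 0).2 + (x 0).1, (x 1).2 + (x 1).1))
    (hψmm : ∀ x : Fin 2 → ℝ × ℝ, ψmm x = gmm ((x 0).2 - (x 0).1, (x 1).2 - (x 1).1))
    (hψpm : ∀ x : Fin 2 → ℝ × ℝ, ψpm x = Gpm ((x 0).2 + (x 0).1, (x 1).2 - (x 1).1))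
    (hψmp : ∀ x : Fin 2 → ℝ × ℝ, ψmp x = Gmp ((x 0).2 - (x 0).1, (x 1).2 + (x 1).1)) :
    (ContinuousOn ψpp (closure (S1 2)) ∧ ContDiffOn ℝ 1 ψpp (S1 2) ∧
      Transport ![(1 : ℝ), 1] (S1 2) ψpp) ∧
    (ContinuousOn ψmm (closure (S1 2)) ∧ ContDiffOn ℝ 1 ψmm (S1 2) ∧
      Transport ![(-1 : ℝ), -1] (S1 2) ψmm) ∧
    (ContinuousOn ψpm (closure (S1 2)) ∧ ContDiffOn ℝ 1 ψpm (S1 2) ∧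
      Transport ![(1 : ℝ), -1] (S1 2) ψpm) ∧
    (ContinuousOn ψmp (closure (S1 2)) ∧ ContDiffOn ℝ 1 ψmp (S1 2) ∧
      Transport ![(-1 : ℝ), 1] (S1 2) ψmp) ∧
    (∀ p ∈ C12, ψpm p = Complex.exp (Complex.I * (φ : ℂ)) * ψmp p) ∧
    (∀ z1 z2 : ℝ, z1 ≤ z2 →
      ψpp ![((0 : ℝ), z1), ((0 : ℝ), z2)] = gpp (z1, z2) ∧
      ψpm ![((0 : ℝ), z1), ((0 : ℝ), z2)] = gpm (z1, z2) ∧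
      ψmp ![((0 : ℝ), z1), ((0 : ℝ), z2)] = gmp (z1, z2) ∧
      ψmm ![((0 : ℝ), z1), ((0 : ℝ), z2)] = gmm (z1, z2)) := by
  have hsub1 := closure_S1_sub 1 (Or.inl rfl)
  have hsubm := closure_S1_sub (-1) (Or.inr rfl)
  have epp : ∀ x ∈ closure (S1 2), ψpp x = Gpp (L' 1 1 x) := by
    intro x hx
    have h := hsub1 hx
    simp only [Set.mem_setOf_eq, one_mul] at h
    rw [hψpp, hgppG _ h, L'_apply]
    norm_num
  have emm : ∀ x ∈ closure (S1 2), ψmm x = Gmm (L' (-1) (-1) x) := by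
    intro x hx
    have h := hsubm hx
    simp only [Set.mem_setOf_eq] at h
    rw [hψmm, hgmmG _ (by dsimp; linarith), L'_apply]
    congr 1 <;> ring
  have epm : ∀ x, ψpm x = Gpm (L' 1 (-1) x) := by
    intro x
    rw [hψpm, L'_apply]
    congr 1 <;> ring
  have emp : ∀ x, ψmp x = Gmp (L' (-1) 1 x) := by
    intro x
    rw [hψmp, L'_apply]
    congr 1 <;> ring
  refine ⟨⟨?_, ?_, ?_⟩, ⟨?_, ?_, ?_⟩, ⟨?_, ?_, ?_⟩, ⟨?_, ?_, ?_⟩, ?_, ?_⟩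
  · exact ((hGpp.continuous.comp (L' 1 1).continuous).continuousOn).congr epp
  · exact ((hGpp.comp (L' 1 1).contDiff).contDiffOn).congr
      (fun x hx => epp x (subset_closure hx))
  · exact transport_comp' 1 1 Gpp hGpp ψpp epp
  · exact ((hGmm.continuous.comp (L' (-1) (-1)).continuous).continuousOn).congr emm
  · exact ((hGmm.comp (L' (-1) (-1)).contDiff).contDiffOn).congr
      (fun x hx => emm x (subset_closure hx))
  · exact transport_comp' (-1) (-1) Gmm hGmm ψmm emm
  · exact ((hGpm.continuous.comp (L' 1 (-1)).continuous).continuousOn).congr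
      (fun x _ => epm x)
  · exact ((hGpm.comp (L' 1 (-1)).contDiff).contDiffOn).congr (fun x _ => epm x)
  · exact transport_comp' 1 (-1) Gpm hGpm ψpm (fun x _ => epm x)
  · exact ((hGmp.continuous.comp (L' (-1) 1).continuous).continuousOn).congr
      (fun x _ => emp x)
  · exact ((hGmp.comp (L' (-1) 1).contDiff).contDiffOn).congr (fun x _ => emp x)
  · exact transport_comp' (-1) 1 Gmp hGmp ψmp (fun x _ => emp x)
  · rintro p ⟨hpcl, ht, hz⟩
    rw [hψpm, hψmp, ← ht, ← hz]
    exact boundary_lemma φ gpm gmp Gpm Gmp hGpm1 hGpm2 hGmp1 hGmp2 hGpm hGmp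
      (p 0).1 (p 0).2
  · intro z1 z2 h
    refine ⟨by simp [hψpp], ?_, ?_, by simp [hψmm]⟩
    · rw [hψpm]; simpa using hGpm1 (z1, z2) h
    · rw [hψmp]; simpa using hGmp1 (z1, z2) h
end
end
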